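/- Let X be an irreducible recurrent Markov chain on a countable set S with transition matrix P, K ⊆ A ⊆ S finite, z ∈ K, K̃ = K \ {z}, A' = A \ K, T = inf{n ≥ 0 : X_n ∈ A^c}, T_K = inf{n ≥ 1 : X_n ∈ K}, ψ(z) = inf{n ≥ 0 : X_n = z}. Suppose q : S → ℝ₊ satisfies A1(q) with Lyapunov function v, and set f(x) = 𝔼_x Σ_{j=0}^{ψ(z)−1} q(X_j), G(x,y) = ℙ_x(X_{T_K} = y, T_K < T) for x,y ∈ K̃, ξ(x) = ℙ_x(T < T_K), k(x,q) = 𝔼_x Σ_{j=0}^{(T_K ∧ T)−1} q(X_j), k̃'(x,q) = 𝔼_x[v(X_T) I(T < T_K)], and β(x,q) = k(x,q) + k̃'(x,q). Then for every x ∈ K̃: f(x) ≤ β(x,q) + Σ_{y ∈ K̃} G(x,y) f(y) + ξ(x) · max_{w ∈ K̃} f(w). -/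

import Mathlib

open MeasureTheory ENNReal Filter

set_option autoImplicit false

noncomputable section

/-- `n`-step transition probabilities of a transition matrix `P`. -/
def mstep {S : Type*} [DecidableEq S] (P : S → S → ℝ) : ℕ → S → S → ℝ
  | 0 => fun x y => if x = y then (1 : ℝ) else 0
  | (n + 1) => fun x y => ∑' z : S, mstep P n x z * P z y

/-- A Markov chain on a state space `S`: a stochastic transition matrix together
with the family of path-space laws `μ x` (law of the chain started at `x`),
characterized by its finite-dimensional distributions. -/
structure MC (S : Type*) [DecidableEq S] [MeasurableSpace S] where
  P : S → S → ℝ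
  μ : S → Measure (ℕ → S)
  prob : ∀ x, IsProbabilityMeasure (μ x)
  nonneg : ∀ x y, 0 ≤ P x y
  rowsum : ∀ x, HasSum (P x) 1
  fdd : ∀ (x : S) (n : ℕ) (γ : ℕ → S),
      μ x {ω | ∀ i ≤ n, ω i = γ i}
        = if γ 0 = x then ∏ i ∈ Finset.range n, ENNReal.ofReal (P (γ i) (γ (i + 1))) else 0

variable {S : Type*} [DecidableEq S] [MeasurableSpace S]

def MC.Irreducible (X : MC S) : Prop :=
  ∀ x y : S, ∃ n : ℕ, 0 < mstep X.P n x y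

def MC.Recurrent (X : MC S) : Prop :=
  ∀ x : S, X.μ x {ω | ∃ n : ℕ, 1 ≤ n ∧ ω n = x} = 1

/-- first time `n ≥ m` at which the path is in `B` (`⊤` if there is none). -/
def hit (m : ℕ) (B : Set S) (ω : ℕ → S) : ℕ∞ :=
  sInf {t : ℕ∞ | ∃ n : ℕ, t = (n : ℕ∞) ∧ m ≤ n ∧ ω n ∈ B}

/-- the path evaluated at an extended time (junk value at `⊤`). -/
def evalAt (ω : ℕ → S) (t : ℕ∞) : S := ω t.toNat

/-- `Σ_{j=0}^{τ(ω)-1} q(ω_j)` as an extended real. -/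
def pathReward (q : S → ℝ) (τ : (ℕ → S) → ℕ∞) (ω : ℕ → S) : ℝ≥0∞ :=
  ∑' j : ℕ, if (j : ℕ∞) < τ ω then ENNReal.ofReal (q (ω j)) else 0

/-- `𝔼_x Σ_{j=0}^{τ-1} q(X_j)`. -/
def MC.ER (X : MC S) (x : S) (q : S → ℝ) (τ : (ℕ → S) → ℕ∞) : ℝ≥0∞ :=
  ∫⁻ ω, pathReward q τ ω ∂ X.μ x

/-- Condition A1(q): `v` is a nonnegative Lyapunov function satisfying
`(Pv)(x) ≤ v(x) - q(x) + c·I(x ∈ K)` (with `Pv` an absolutely convergent sum). -/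
def MC.A1 (X : MC S) (K : Set S) (q v : S → ℝ) (c : ℝ) : Prop :=
  (∀ x, 0 ≤ v x) ∧ (∀ x : S, Summable fun y => X.P x y * v y) ∧
    ∀ x : S, (∑' y : S, X.P x y * v y) ≤ v x - q x + K.indicator (fun _ => c) x

/-- `T = inf{n ≥ 0 : X_n ∈ Aᶜ}`. -/
def TA (A : Finset S) (ω : ℕ → S) : ℕ∞ := hit 0 ((A : Set S))ᶜ ω

/-- `T_K = inf{n ≥ 1 : X_n ∈ K}`. -/
def TKt (K : Finset S) (ω : ℕ → S) : ℕ∞ := hit 1 (K : Set S) ω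

/-- `τ(z) = inf{n ≥ 1 : X_n = z}`. -/
def tauz (z : S) (ω : ℕ → S) : ℕ∞ := hit 1 {z} ω

/-- `ψ(z) = inf{n ≥ 0 : X_n = z}`. -/
def psiz (z : S) (ω : ℕ → S) : ℕ∞ := hit 0 {z} ω

/-- sub-block of a transition matrix. -/
def blk (P : S → S → ℝ) (F G : Finset S) : Matrix ↥F ↥G ℝ :=
  Matrix.of fun x y => P x.1 y.1

/-- `G(x,y) = ℙ_x(X_{T_K} = y, T_K < T)` for `x, y ∈ K̃ = K \ {z}`. -/
def Gmat (X : MC S) (K A : Finset S) (z : S) :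
    Matrix ↥(K.erase z) ↥(K.erase z) ℝ :=
  Matrix.of fun x y =>
    (X.μ x.1 {ω | TKt K ω < TA A ω ∧ evalAt ω (TKt K ω) = y.1}).toReal

/-- `ξ(x) = ℙ_x(T < T_K)`. -/
def xiFun (X : MC S) (K A : Finset S) (x : S) : ℝ :=
  (X.μ x {ω | TA A ω < TKt K ω}).toReal

/-- `k(x,q) = 𝔼_x Σ_{j=0}^{(T_K ∧ T)-1} q(X_j)`. -/
def kFun (X : MC S) (K A : Finset S) (q : S → ℝ) (x : S) : ℝ :=
  (X.ER x q fun ω => min (TKt K ω) (TA A ω)).toReal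

/-- `k̃'(x,q) = 𝔼_x[v(X_T); T < T_K]`. -/
def kpFun (X : MC S) (K A : Finset S) (v : S → ℝ) (x : S) : ℝ :=
  (∫⁻ ω, (if TA A ω < TKt K ω then ENNReal.ofReal (v (evalAt ω (TA A ω))) else 0)
      ∂ X.μ x).toReal

/-- `β(x,q) = k(x,q) + k̃'(x,q)`. -/
def betaFun (X : MC S) (K A : Finset S) (q v : S → ℝ) (x : S) : ℝ :=
  kFun X K A q x + kpFun X K A v x

def xiVec (X : MC S) (K A : Finset S) (z : S) : ↥(K.erase z) → ℝ :=
  fun x => xiFun X K A x.1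

/-- the norm condition `‖(I-G)⁻¹ ξ‖_K̃ < 1`. -/
def normCond (X : MC S) (K A : Finset S) (z : S) : Prop :=
  ‖(1 - Gmat X K A z)⁻¹.mulVec (xiVec X K A z)‖ < 1

/-- `κ̰(·,q) = (I-G)⁻¹ k(q)` on `K̃`. -/
def kappaLoK (X : MC S) (K A : Finset S) (z : S) (q : S → ℝ) : ↥(K.erase z) → ℝ :=
  (1 - Gmat X K A z)⁻¹.mulVec fun y => kFun X K A q y.1

/-- `κ̃(·,q)` on `K̃`. -/
def kappaHiK (X : MC S) (K A : Finset S) (z : S) (q v : S → ℝ) : ↥(K.erase z) → ℝ :=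
  (1 - Gmat X K A z)⁻¹.mulVec (fun y => betaFun X K A q v y.1)
    + (‖(1 - Gmat X K A z)⁻¹.mulVec (fun y => betaFun X K A q v y.1)‖
        / (1 - ‖(1 - Gmat X K A z)⁻¹.mulVec (xiVec X K A z)‖))
      • (1 - Gmat X K A z)⁻¹.mulVec (xiVec X K A z)

/-- the matrix `(I - P₂₂)⁻¹ P₂₁`. -/
def WAK (X : MC S) (K A : Finset S) : Matrix ↥(A \ K) ↥K ℝ :=
  (1 - blk X.P (A \ K) (A \ K))⁻¹ * blk X.P (A \ K) K

/-- `κ̰(·,q)` on `A \ {z}` (extended by `0` off `A \ {z}`). -/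
def kappaLo (X : MC S) (K A : Finset S) (z : S) (q : S → ℝ) (x : S) : ℝ :=
  if hx : x ∈ K.erase z then kappaLoK X K A z q ⟨x, hx⟩
  else if hx' : x ∈ A \ K then
    kFun X K A q x + ∑ y : ↥(K.erase z),
      WAK X K A ⟨x, hx'⟩ ⟨y.1, Finset.mem_of_mem_erase y.2⟩ * kappaLoK X K A z q y
  else 0

/-- `κ̃(·,q)` on `A \ {z}` (extended by `0` off `A \ {z}`). -/
def kappaHi (X : MC S) (K A : Finset S) (z : S) (q v : S → ℝ) (x : S) : ℝ :=
  if hx : x ∈ K.erase z then kappaHiK X K A z q v ⟨x, hx⟩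
  else if hx' : x ∈ A \ K then
    betaFun X K A q v x
      + (∑ y : ↥(K.erase z),
          WAK X K A ⟨x, hx'⟩ ⟨y.1, Finset.mem_of_mem_erase y.2⟩ * kappaHiK X K A z q v y)
      + xiFun X K A x * ‖kappaHiK X K A z q v‖
  else 0

/-- `κ̰(z,q)`, the one-step extension of the lower bound at `z`. -/
def kappaLoZ (X : MC S) (K A : Finset S) (z : S) (q : S → ℝ) : ℝ :=
  q z + ∑ y ∈ A.erase z, X.P z y * kappaLo X K A z q y

/-- `κ̃(z,q)`, the one-step extension of the upper bound at `z`. -/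
def kappaHiZ (X : MC S) (K A : Finset S) (z : S) (q v : S → ℝ) : ℝ :=
  q z + (∑ y ∈ A.erase z, X.P z y * kappaHi X K A z q v y)
    + ∑' y : {y : S // y ∉ A}, X.P z y.1 * (v y.1 + ‖kappaHiK X K A z q v‖)

namespace KeyAux

variable {S : Type*}

lemma hit_le_of_mem {m n : ℕ} {B : Set S} {ω : ℕ → S} (hmn : m ≤ n) (h : ω n ∈ B) :
    hit m B ω ≤ n := sInf_le ⟨n, rfl, hmn, h⟩

lemma coe_le_hit {m : ℕ} {B : Set S} {ω : ℕ → S} : (m : ℕ∞) ≤ hit m B ω :=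
  le_sInf (by rintro t ⟨n, rfl, hmn, _⟩; exact_mod_cast hmn)

lemma hit_eq_top_iff {m : ℕ} {B : Set S} {ω : ℕ → S} :
    hit m B ω = ⊤ ↔ ∀ i, m ≤ i → ω i ∉ B := by
  constructor
  · intro h i hmi hB
    have := hit_le_of_mem hmi hB
    rw [h] at this
    exact absurd (top_le_iff.1 this) (by simp)
  · intro h
    have : {t : ℕ∞ | ∃ n : ℕ, t = (n : ℕ∞) ∧ m ≤ n ∧ ω n ∈ B} = ∅ := by
      ext t; simp only [Set.mem_setOf_eq, Set.mem_empty_iff_false, iff_false]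
      rintro ⟨n, rfl, hmn, hB⟩
      exact h n hmn hB
    simp [hit, this]

lemma hit_spec {m : ℕ} {B : Set S} {ω : ℕ → S} (h : hit m B ω ≠ ⊤) :
    ∃ k : ℕ, hit m B ω = k ∧ m ≤ k ∧ ω k ∈ B := by
  have hne : ∃ n : ℕ, m ≤ n ∧ ω n ∈ B := by
    by_contra hc
    push_neg at hc
    exact h (hit_eq_top_iff.2 hc)
  classical
  let k := Nat.find hne
  refine ⟨k, ?_, (Nat.find_spec hne).1, (Nat.find_spec hne).2⟩
  refine le_antisymm (hit_le_of_mem (Nat.find_spec hne).1 (Nat.find_spec hne).2) ?_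
  refine le_sInf ?_
  rintro t ⟨n, rfl, hmn, hB⟩
  exact_mod_cast Nat.find_min' hne ⟨hmn, hB⟩

lemma lt_hit_iff {m j : ℕ} {B : Set S} {ω : ℕ → S} :
    (j : ℕ∞) < hit m B ω ↔ ∀ i, m ≤ i → i ≤ j → ω i ∉ B := by
  constructor
  · intro h i hmi hij hB
    have h1 : hit m B ω ≤ i := hit_le_of_mem hmi hB
    have h2 : (i : ℕ∞) ≤ (j : ℕ∞) := by exact_mod_cast hij
    exact absurd (lt_of_le_of_lt (h1.trans h2) h) (lt_irrefl _)
  · intro h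
    have h1 : ((j + 1 : ℕ) : ℕ∞) ≤ hit m B ω := by
      refine le_sInf ?_
      rintro t ⟨n, rfl, hmn, hB⟩
      have : ¬ n ≤ j := fun hle => h n hmn hle hB
      exact_mod_cast Nat.succ_le_of_lt (not_le.1 this)
    exact lt_of_lt_of_le (by exact_mod_cast Nat.lt_succ_self j) h1

lemma hit_eq_coe_iff {m n : ℕ} {B : Set S} {ω : ℕ → S} :
    hit m B ω = (n : ℕ∞) ↔ m ≤ n ∧ ω n ∈ B ∧ ∀ i, m ≤ i → i < n → ω i ∉ B := by
  constructor
  · intro h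
    have hne : hit m B ω ≠ ⊤ := by rw [h]; simp
    obtain ⟨k, hk, hmk, hkB⟩ := hit_spec hne
    have hkn : k = n := by rw [hk] at h; exact_mod_cast h
    subst hkn
    refine ⟨hmk, hkB, fun i hmi hin hB => ?_⟩
    have h1 : hit m B ω ≤ i := hit_le_of_mem hmi hB
    rw [hk] at h1
    exact absurd (by exact_mod_cast h1 : k ≤ i) (not_le.2 hin)
  · rintro ⟨hmn, hB, hmin⟩
    have h1 : hit m B ω ≤ n := hit_le_of_mem hmn hB
    rcases eq_or_lt_of_le h1 with heq | hlt
    · exact heq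
    · exfalso
      have hne : hit m B ω ≠ ⊤ := ne_top_of_lt hlt
      obtain ⟨k, hk, hmk, hkB⟩ := hit_spec hne
      rw [hk] at hlt
      exact hmin k hmk (by exact_mod_cast hlt) hkB

lemma le_hit_iff {m n : ℕ} {B : Set S} {ω : ℕ → S} :
    (n : ℕ∞) ≤ hit m B ω ↔ ∀ i, m ≤ i → i < n → ω i ∉ B := by
  constructor
  · intro h i hmi hin hB
    have h1 : hit m B ω ≤ i := hit_le_of_mem hmi hB
    have : (n : ℕ∞) ≤ (i : ℕ∞) := h.trans h1
    exact absurd (by exact_mod_cast this : n ≤ i) (not_le.2 hin)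
  · intro h
    cases n with
    | zero => exact zero_le
    | succ n =>
      have : (n : ℕ∞) < hit m B ω :=
        lt_hit_iff.2 fun i hmi hij => h i hmi (Nat.lt_succ_of_le hij)
      exact_mod_cast Order.add_one_le_of_lt this

lemma hit_eq_coe_iff' {m n : ℕ} {B : Set S} {ω : ℕ → S} :
    hit m B ω = (n : ℕ∞) ↔
      ((n : ℕ∞) ≤ hit m B ω ∧ ¬ ((n + 1 : ℕ) : ℕ∞) ≤ hit m B ω) := by
  constructor
  · intro h
    refine ⟨le_of_eq h.symm, fun hle => ?_⟩
    rw [h] at hle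
    exact absurd (by exact_mod_cast hle : n + 1 ≤ n) (by omega)
  · rintro ⟨h1, h2⟩
    have hlt : hit m B ω < ((n + 1 : ℕ) : ℕ∞) := not_le.1 h2
    obtain ⟨k, hk, _, _⟩ := hit_spec (ne_top_of_lt hlt)
    rw [hk] at h1 hlt ⊢
    have : k < n + 1 := by exact_mod_cast hlt
    have : n ≤ k := by exact_mod_cast h1
    congr 1
    omega

end KeyAux
namespace KeyAux

/-- the shift on path space -/
def shft {S : Type*} (n : ℕ) (ω : ℕ → S) : ℕ → S := fun k => ω (n + k)

variable {S : Type*}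

lemma psiz_shift {z : S} {ω : ℕ → S} {n : ℕ} (h : (n : ℕ∞) < psiz z ω) :
    psiz z ω = (n : ℕ∞) + psiz z (shft n ω) := by
  have hno : ∀ i ≤ n, ω i ≠ z := fun i hi hiz => by
    exact (lt_hit_iff.1 h i (zero_le) hi) (by simpa using hiz)
  rcases eq_or_ne (psiz z (shft n ω)) ⊤ with htop | hne
  · rw [htop]
    rw [add_top]
    refine hit_eq_top_iff.2 fun i _ hiz => ?_
    rcases le_or_gt i n with hle | hlt
    · exact hno i hle hiz
    · have := hit_eq_top_iff.1 htop (i - n) (zero_le)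
      apply this
      simpa [shft, Nat.add_sub_cancel' hlt.le] using hiz
  · obtain ⟨k, hk, _, hkB⟩ := hit_spec hne
    rw [show psiz z (shft n ω) = (k : ℕ∞) from hk]
    rw [show (n : ℕ∞) + (k : ℕ∞) = ((n + k : ℕ) : ℕ∞) by push_cast; ring]
    refine hit_eq_coe_iff.2 ⟨zero_le, by simpa [shft] using hkB, ?_⟩
    intro i _ hi hiz
    rcases le_or_gt i n with hle | hlt
    · exact hno i hle (by simpa using hiz)
    · have h2 := hit_eq_coe_iff.1 hk
      refine h2.2.2 (i - n) (zero_le) (by omega) ?_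
      simpa [shft, Nat.add_sub_cancel' hlt.le] using hiz

lemma one_le_TKt {K : Finset S} {ω : ℕ → S} : (1 : ℕ∞) ≤ TKt K ω := by
  have := coe_le_hit (m := 1) (B := (K : Set S)) (ω := ω)
  exact_mod_cast this

lemma TKt_eq_one {K : Finset S} {ω : ℕ → S} (h : ω 1 ∈ K) : TKt K ω = 1 := by
  refine hit_eq_coe_iff.2 ⟨le_refl 1, by exact_mod_cast h, fun i h1 hi => by omega⟩

lemma TKt_shift {K : Finset S} {ω : ℕ → S} (h : ω 1 ∉ K) :
    TKt K ω = 1 + TKt K (shft 1 ω) := by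
  rcases eq_or_ne (TKt K (shft 1 ω)) ⊤ with htop | hne
  · rw [htop, add_top]
    refine hit_eq_top_iff.2 fun i h1 hiK => ?_
    rcases eq_or_lt_of_le h1 with rfl | h2
    · exact h hiK
    · have := hit_eq_top_iff.1 htop (i - 1) (by omega)
      apply this
      simpa [shft, show 1 + (i - 1) = i by omega] using hiK
  · obtain ⟨k, hk, hk1, hkB⟩ := hit_spec hne
    rw [show TKt K (shft 1 ω) = (k : ℕ∞) from hk]
    rw [show (1 : ℕ∞) + (k : ℕ∞) = ((1 + k : ℕ) : ℕ∞) by push_cast; ring]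
    refine hit_eq_coe_iff.2 ⟨by omega, by simpa [shft] using hkB, ?_⟩
    intro i h1 hi hiK
    rcases eq_or_lt_of_le h1 with rfl | h2
    · exact h hiK
    · have h3 := hit_eq_coe_iff.1 hk
      refine h3.2.2 (i - 1) (by omega) (by omega) ?_
      simpa [shft, show 1 + (i - 1) = i by omega] using hiK

lemma psiz_eq_zero {z : S} {ω : ℕ → S} (h : ω 0 = z) : psiz z ω = 0 := by
  have : psiz z ω ≤ (0 : ℕ) := hit_le_of_mem (le_refl 0) (by simpa using h)
  simpa using this

/-! ### pathReward lemmas -/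

lemma pathReward_mono {q : S → ℝ} {τ τ' : (ℕ → S) → ℕ∞} {ω : ℕ → S}
    (h : τ ω ≤ τ' ω) : pathReward q τ ω ≤ pathReward q τ' ω := by
  refine Summable.tsum_le_tsum (fun j => ?_) ENNReal.summable ENNReal.summable
  by_cases hj : (j : ℕ∞) < τ ω
  · rw [if_pos hj, if_pos (lt_of_lt_of_le hj h)]
  · rw [if_neg hj]; exact zero_le

lemma tsum_shift_split (f : ℕ → ℝ≥0∞) (n : ℕ) :
    ∑' j, f j = (∑ j ∈ Finset.range n, f j) + ∑' j, f (n + j) := by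
  rw [← Summable.sum_add_tsum_nat_add' (f := f) (k := n) ENNReal.summable]
  congr 1
  exact tsum_congr fun j => by rw [add_comm]

lemma pathReward_split {q : S → ℝ} {τ τ' τ'' : (ℕ → S) → ℕ∞} {ω : ℕ → S} {n : ℕ}
    (h : τ ω = (n : ℕ∞) + τ'' (shft n ω)) (h' : τ' ω = (n : ℕ∞)) :
    pathReward q τ ω = pathReward q τ' ω + pathReward q τ'' (shft n ω) := by
  unfold pathReward
  rw [h, h']
  rw [tsum_shift_split (fun j => if (j : ℕ∞) < (n : ℕ∞) + τ'' (shft n ω)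
      then ENNReal.ofReal (q (ω j)) else 0) n]
  congr 1
  · have h1 : (∑' j : ℕ, if (j : ℕ∞) < (n : ℕ∞) then ENNReal.ofReal (q (ω j)) else 0)
        = ∑ j ∈ Finset.range n, (if (j : ℕ∞) < (n : ℕ∞) then ENNReal.ofReal (q (ω j)) else 0) := by
      refine tsum_eq_sum fun j hj => if_neg fun hlt => hj (Finset.mem_range.2 (by exact_mod_cast hlt))
    rw [h1]
    refine Finset.sum_congr rfl fun j hj => ?_
    have hj1 : (j : ℕ∞) < (n : ℕ∞) := by exact_mod_cast Finset.mem_range.1 hj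
    rw [if_pos (lt_of_lt_of_le hj1 le_self_add), if_pos hj1]
  · refine tsum_congr fun j => ?_
    have hne : (n : ℕ∞) ≠ ⊤ := by
      intro hc
      exact absurd hc (by simp)
    have hiff : ((n + j : ℕ) : ℕ∞) < (n : ℕ∞) + τ'' (shft n ω) ↔ (j : ℕ∞) < τ'' (shft n ω) := by
      rw [show ((n + j : ℕ) : ℕ∞) = (n : ℕ∞) + (j : ℕ∞) by push_cast; ring]
      exact WithTop.add_lt_add_iff_left hne
    by_cases hj : (j : ℕ∞) < τ'' (shft n ω)
    · rw [if_pos (hiff.2 hj), if_pos hj]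
      rfl
    · rw [if_neg (fun hlt => hj (hiff.1 hlt)), if_neg hj]

/-- the master pointwise inequality: reward up to `ψ = psiz z` is at most reward up
to `τ` plus the shifted reward at the (finite) value of `τ`. -/
lemma pathReward_le_split {q : S → ℝ} (z : S) (τ : (ℕ → S) → ℕ∞) (ω : ℕ → S) :
    pathReward q (psiz z) ω
      ≤ pathReward q τ ω
        + ∑' n : ℕ, Set.indicator {ω' | τ ω' = (n : ℕ∞)}
            (fun ω' => pathReward q (psiz z) (shft n ω')) ω := by
  rcases le_or_gt (psiz z ω) (τ ω) with hle | hlt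
  · exact le_add_right (pathReward_mono hle)
  · obtain ⟨n, hn⟩ := WithTop.ne_top_iff_exists.1 (ne_top_of_lt hlt)
    have hn' : τ ω = (n : ℕ∞) := hn.symm
    have hψ : psiz z ω = (n : ℕ∞) + psiz z (shft n ω) :=
      psiz_shift (by rw [← hn']; exact hlt)
    rw [pathReward_split (q := q) (τ := psiz z) (τ' := τ) (τ'' := psiz z) hψ hn']
    refine add_le_add_right ?_ _
    refine le_trans (le_of_eq ?_) (ENNReal.le_tsum n)
    rw [Set.indicator_of_mem (by exact hn' : ω ∈ {ω' | τ ω' = (n : ℕ∞)})]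

end KeyAux
namespace KeyAux

open MeasureTheory

variable {S : Type*} [DecidableEq S] [MeasurableSpace S] [Countable S]
  [MeasurableSingletonClass S]

lemma measurableSet_S (s : Set S) : MeasurableSet s := s.to_countable.measurableSet

/-- exact cylinder of length `n`. -/
def cyl (n : ℕ) (γ : ℕ → S) : Set (ℕ → S) := {ω | ∀ i ≤ n, ω i = γ i}

lemma measurableSet_cyl (n : ℕ) (γ : ℕ → S) : MeasurableSet (cyl n γ) := by
  have h : cyl n γ = ⋂ (i : ℕ) (_ : i ≤ n), (fun ω : ℕ → S => ω i) ⁻¹' {γ i} := by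
    ext ω; simp [cyl]
  rw [h]
  exact MeasurableSet.iInter fun i => MeasurableSet.iInter fun _ =>
    measurable_pi_apply i (measurableSet_S {γ i})

/-- extension of a finite path to an infinite one. -/
def ext' (n : ℕ) (p : Fin (n + 1) → S) : ℕ → S :=
  fun j => p ⟨min j n, Nat.lt_succ_of_le (min_le_right _ _)⟩

lemma ext'_eq (n : ℕ) (p : Fin (n + 1) → S) {j : ℕ} (h : j ≤ n) :
    ext' n p j = p ⟨j, Nat.lt_succ_of_le h⟩ := by
  simp only [ext']
  congr 1
  exact Fin.ext (by simp [min_eq_left h])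

lemma mem_cyl_self (n : ℕ) (ω : ℕ → S) : ω ∈ cyl n (ext' n (fun i => ω i.1)) := by
  intro i hi
  rw [ext'_eq n _ hi]

lemma cyl_disjoint {n : ℕ} {p p' : Fin (n + 1) → S} (h : p ≠ p') :
    Disjoint (cyl n (ext' n p)) (cyl n (ext' n p')) := by
  rw [Set.disjoint_left]
  intro ω h1 h2
  apply h
  funext i
  have e1 := h1 i.1 (Nat.lt_succ_iff.1 i.2)
  have e2 := h2 i.1 (Nat.lt_succ_iff.1 i.2)
  rw [ext'_eq n p (Nat.lt_succ_iff.1 i.2)] at e1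
  rw [ext'_eq n p' (Nat.lt_succ_iff.1 i.2)] at e2
  rw [show (⟨i.1, Nat.lt_succ_of_le (Nat.lt_succ_iff.1 i.2)⟩ : Fin (n+1)) = i from Fin.ext rfl] at e1 e2
  rw [← e1, ← e2]

lemma iUnion_cyl (n : ℕ) : (⋃ p : Fin (n + 1) → S, cyl n (ext' n p)) = Set.univ := by
  refine Set.eq_univ_of_forall fun ω => Set.mem_iUnion.2 ⟨fun i => ω i.1, mem_cyl_self n ω⟩

lemma lintegral_cyl_partition (μ : Measure (ℕ → S)) (g : (ℕ → S) → ℝ≥0∞) (n : ℕ) :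
    ∫⁻ ω, g ω ∂μ = ∑' p : Fin (n + 1) → S, ∫⁻ ω in cyl n (ext' n p), g ω ∂μ := by
  rw [← lintegral_iUnion (fun p => measurableSet_cyl n (ext' n p))
    (fun p p' h => cyl_disjoint h) g, iUnion_cyl, setLIntegral_univ]

lemma MC_cyl (X : MC S) (x : S) (n : ℕ) (γ : ℕ → S) :
    X.μ x (cyl n γ)
      = if γ 0 = x then ∏ i ∈ Finset.range n, ENNReal.ofReal (X.P (γ i) (γ (i + 1))) else 0 :=
  X.fdd x n γ

lemma pi_eq_generateFrom :
    (inferInstance : MeasurableSpace (ℕ → S))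
      = MeasurableSpace.generateFrom {s : Set (ℕ → S) | ∃ n γ, s = cyl n γ} := by
  refine le_antisymm ?_ ?_
  · refine iSup_le fun i => ?_
    intro t ht
    obtain ⟨s, _, rfl⟩ := ht
    have hy : ∀ y : S, MeasurableSet[MeasurableSpace.generateFrom
        {s : Set (ℕ → S) | ∃ n γ, s = cyl n γ}] ((fun ω : ℕ → S => ω i) ⁻¹' {y}) := by
      intro y
      have hU : (fun ω : ℕ → S => ω i) ⁻¹' {y}
          = ⋃ p : {p : Fin (i + 1) → S // p ⟨i, Nat.lt_succ_self i⟩ = y},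
              cyl i (ext' i p.1) := by
        ext ω
        simp only [Set.mem_preimage, Set.mem_singleton_iff, Set.mem_iUnion]
        constructor
        · intro hω
          refine ⟨⟨fun j => ω j.1, ?_⟩, mem_cyl_self i ω⟩
          exact hω
        · rintro ⟨p, hp⟩
          have := hp i (le_refl i)
          rw [ext'_eq i p.1 (le_refl i)] at this
          rw [this, p.2]
      rw [hU]
      exact MeasurableSet.iUnion fun p =>
        MeasurableSpace.measurableSet_generateFrom ⟨i, ext' i p.1, rfl⟩
    have hU2 : (fun ω : ℕ → S => ω i) ⁻¹' s = ⋃ y : s, (fun ω : ℕ → S => ω i) ⁻¹' {y.1} := by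
      ext ω; simp
    rw [hU2]
    exact MeasurableSet.iUnion fun y => hy y.1
  · refine MeasurableSpace.generateFrom_le ?_
    rintro t ⟨n, γ, rfl⟩
    exact measurableSet_cyl n γ

lemma isPiSystem_cyl :
    IsPiSystem {s : Set (ℕ → S) | ∃ n γ, s = cyl n γ} := by
  rintro s ⟨n, γ, rfl⟩ t ⟨m, δ, rfl⟩ hne
  obtain ⟨ω, hω1, hω2⟩ := hne
  rcases le_total n m with h | h
  · refine ⟨m, δ, Set.inter_eq_self_of_subset_right fun ω' hω' i hi => ?_⟩
    rw [hω' i (hi.trans h), ← hω2 i (hi.trans h), hω1 i hi]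
  · refine ⟨n, γ, Set.inter_eq_self_of_subset_left fun ω' hω' i hi => ?_⟩
    rw [hω' i (hi.trans h), ← hω1 i (hi.trans h), hω2 i hi]

/-- concatenation of finite paths -/
def cat (n : ℕ) (γ δ : ℕ → S) : ℕ → S := fun j => if j ≤ n then γ j else δ (j - n)

lemma shift_inter_eq {n m : ℕ} {γ δ : ℕ → S} (h : δ 0 = γ n) :
    shft n ⁻¹' cyl m δ ∩ cyl n γ = cyl (n + m) (cat n γ δ) := by
  ext ω
  simp only [Set.mem_inter_iff, Set.mem_preimage]
  constructor
  · rintro ⟨h1, h2⟩ i hi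
    rcases le_or_gt i n with hin | hin
    · rw [cat, if_pos hin]; exact h2 i hin
    · rw [cat, if_neg (not_le.2 hin)]
      have := h1 (i - n) (by omega)
      simpa [shft, show n + (i - n) = i by omega] using this
  · intro h1
    constructor
    · intro j hj
      have := h1 (n + j) (by omega)
      rcases Nat.eq_zero_or_pos j with rfl | hjpos
      · rw [cat, if_pos (by omega)] at this
        show ω (n + 0) = δ 0
        rw [this]
        simpa using h.symm
      · rw [cat, if_neg (by omega), Nat.add_sub_cancel_left] at this
        exact this
    · intro i hi
      have := h1 i (by omega)
      rwa [cat, if_pos hi] at this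

lemma shift_inter_empty {n m : ℕ} {γ δ : ℕ → S} (h : δ 0 ≠ γ n) :
    shft n ⁻¹' cyl m δ ∩ cyl n γ = ∅ := by
  ext ω
  simp only [Set.mem_inter_iff, Set.mem_preimage, Set.mem_empty_iff_false, iff_false]
  rintro ⟨h1, h2⟩
  apply h
  have e1 := h1 0 (zero_le)
  have e2 := h2 n (le_refl n)
  rw [show shft n ω 0 = ω (n + 0) from rfl, Nat.add_zero, e2] at e1
  exact e1.symm

lemma mu_cat (X : MC S) (x : S) {n m : ℕ} {γ δ : ℕ → S} (h : δ 0 = γ n) :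
    X.μ x (cyl (n + m) (cat n γ δ)) = X.μ x (cyl n γ) * X.μ (γ n) (cyl m δ) := by
  rw [MC_cyl, MC_cyl, MC_cyl]
  have hc0 : cat n γ δ 0 = γ 0 := by rw [cat, if_pos (zero_le)]
  by_cases hx : γ 0 = x
  · rw [if_pos (hc0.trans hx), if_pos hx, if_pos h]
    rw [Finset.prod_range_add]
    congr 1
    · refine Finset.prod_congr rfl fun i hi => ?_
      have hin : i < n := Finset.mem_range.1 hi
      rw [cat, if_pos (by omega), cat, if_pos (by omega)]
    · have hA : ∀ i : ℕ, cat n γ δ (n + i) = δ i := by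
        intro i
        rcases Nat.eq_zero_or_pos i with rfl | hip
        · rw [cat, if_pos (by omega)]
          simpa using h.symm
        · rw [cat, if_neg (by omega), Nat.add_sub_cancel_left]
      have hB : ∀ i : ℕ, cat n γ δ (n + i + 1) = δ (i + 1) := by
        intro i
        rw [show n + i + 1 = n + (i + 1) by ring, cat, if_neg (by omega),
          Nat.add_sub_cancel_left]
      exact Finset.prod_congr rfl fun i _ => by rw [hA i, hB i]
  · rw [if_neg (fun hc => hx (hc0.symm.trans hc)), if_neg hx, zero_mul]

lemma measurable_shft (n : ℕ) : Measurable (shft n : (ℕ → S) → (ℕ → S)) :=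
  measurable_pi_lambda _ fun k => measurable_pi_apply (n + k)

/-- the core Markov property on cylinders. -/
lemma markov_cyl (X : MC S) (x : S) (n : ℕ) (γ : ℕ → S) {g : (ℕ → S) → ℝ≥0∞}
    (hg : Measurable g) :
    ∫⁻ ω in cyl n γ, g (shft n ω) ∂(X.μ x)
      = X.μ x (cyl n γ) * ∫⁻ ω', g ω' ∂(X.μ (γ n)) := by
  haveI := X.prob x
  haveI := X.prob (γ n)
  have hmap : Measure.map (shft n) ((X.μ x).restrict (cyl n γ))
      = (X.μ x (cyl n γ)) • X.μ (γ n) := by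
    haveI : IsFiniteMeasure (Measure.map (shft n) ((X.μ x).restrict (cyl n γ))) := by
      constructor
      rw [Measure.map_apply (measurable_shft n) MeasurableSet.univ, Set.preimage_univ,
        Measure.restrict_apply MeasurableSet.univ, Set.univ_inter]
      exact measure_lt_top _ _
    refine ext_of_generate_finite _ pi_eq_generateFrom isPiSystem_cyl ?_ ?_
    · rintro s ⟨m, δ, rfl⟩
      rw [Measure.map_apply (measurable_shft n) (measurableSet_cyl m δ),
        Measure.restrict_apply ((measurable_shft n) (measurableSet_cyl m δ)),
        Measure.smul_apply, smul_eq_mul]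
      by_cases h : δ 0 = γ n
      · rw [shift_inter_eq h, mu_cat X x h]
      · rw [shift_inter_empty h, measure_empty, MC_cyl X (γ n) m δ, if_neg h, mul_zero]
    · rw [Measure.map_apply (measurable_shft n) MeasurableSet.univ, Set.preimage_univ,
        Measure.restrict_apply MeasurableSet.univ, Set.univ_inter,
        Measure.smul_apply, smul_eq_mul, measure_univ, mul_one]
  have hl : ∫⁻ ω in cyl n γ, g (shft n ω) ∂(X.μ x)
      = ∫⁻ ω', g ω' ∂(Measure.map (shft n) ((X.μ x).restrict (cyl n γ))) :=
    (lintegral_map hg (measurable_shft n)).symm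
  rw [hl, hmap, lintegral_smul_measure, smul_eq_mul]

end KeyAux
namespace KeyAux

open MeasureTheory

variable {S : Type*} [DecidableEq S] [MeasurableSpace S] [Countable S]
  [MeasurableSingletonClass S]

lemma measurableSet_evalEq (n : ℕ) (y : S) : MeasurableSet {ω : ℕ → S | ω n = y} := by
  have h : {ω : ℕ → S | ω n = y} = (fun ω : ℕ → S => ω n) ⁻¹' {y} := by ext ω; simp
  rw [h]
  exact measurable_pi_apply n (measurableSet_S {y})

/-- integrating a function of the `n`-th coordinate over a set. -/
lemma lintegral_indicator_eval (μ : Measure (ℕ → S)) {G : Set (ℕ → S)}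
    (hG : MeasurableSet G) (n : ℕ) (h : S → ℝ≥0∞) :
    ∫⁻ ω, G.indicator (fun ω => h (ω n)) ω ∂μ
      = ∑' y : S, μ (G ∩ {ω | ω n = y}) * h y := by
  rw [lintegral_indicator hG]
  have hU : G = ⋃ y : S, G ∩ {ω | ω n = y} := by
    ext ω; simp
  have hdisj : Pairwise (Function.onFun Disjoint fun y : S => G ∩ {ω | ω n = y}) := by
    intro y y' hyy'
    refine Set.disjoint_left.2 fun ω h1 h2 => hyy' ?_
    rw [← h1.2, ← h2.2]
  conv_lhs => rw [hU]
  rw [lintegral_iUnion (fun y => hG.inter (measurableSet_evalEq n y)) hdisj]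
  refine tsum_congr fun y => ?_
  have : ∫⁻ ω in G ∩ {ω | ω n = y}, h (ω n) ∂μ = ∫⁻ _ in G ∩ {ω | ω n = y}, h y ∂μ := by
    refine setLIntegral_congr_fun (hG.inter (measurableSet_evalEq n y)) ?_
    exact fun ω hω => by rw [hω.2]
  rw [this, setLIntegral_const, mul_comm]

/-- the Markov decomposition over the value at time `n`, for events determined
by coordinates `≤ n`. -/
lemma markov_decomp (X : MC S) (x : S) (n : ℕ) {E : Set (ℕ → S)}
    (hE : ∀ ω ω' : ℕ → S, (∀ i ≤ n, ω i = ω' i) → ω ∈ E → ω' ∈ E)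
    {g : (ℕ → S) → ℝ≥0∞} (hg : Measurable g) :
    ∫⁻ ω, E.indicator (fun ω => g (shft n ω)) ω ∂(X.μ x)
      = ∑' y : S, X.μ x (E ∩ {ω | ω n = y}) * ∫⁻ ω', g ω' ∂(X.μ y) := by
  classical
  have hagree : ∀ ω : ℕ → S, ∀ i ≤ n, ω i = ext' n (fun j => ω j.1) i :=
    fun ω i hi => (mem_cyl_self n ω i hi)
  have hEU : E = ⋃ p : {p : Fin (n + 1) → S // ext' n p ∈ E}, cyl n (ext' n p.1) := by
    ext ω
    constructor
    · intro hω
      refine Set.mem_iUnion.2 ⟨⟨fun j => ω j.1, hE ω _ (hagree ω) hω⟩, mem_cyl_self n ω⟩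
    · intro hω
      obtain ⟨p, hp⟩ := Set.mem_iUnion.1 hω
      exact hE (ext' n p.1) ω (fun i hi => (hp i hi).symm) p.2
  have hmeasE : MeasurableSet E := by
    rw [hEU]; exact MeasurableSet.iUnion fun p => measurableSet_cyl _ _
  have hdisj : Pairwise (Function.onFun Disjoint
      fun p : {p : Fin (n + 1) → S // ext' n p ∈ E} => cyl n (ext' n p.1)) :=
    fun p p' hpp' => cyl_disjoint (fun hc => hpp' (Subtype.ext hc))
  rw [lintegral_indicator hmeasE]
  conv_lhs => rw [hEU]
  rw [lintegral_iUnion (fun p => measurableSet_cyl _ _) hdisj]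
  have hterm : ∀ p : {p : Fin (n + 1) → S // ext' n p ∈ E},
      ∫⁻ ω in cyl n (ext' n p.1), g (shft n ω) ∂(X.μ x)
        = X.μ x (cyl n (ext' n p.1)) * ∫⁻ ω', g ω' ∂(X.μ (ext' n p.1 n)) :=
    fun p => markov_cyl X x n (ext' n p.1) hg
  rw [tsum_congr hterm]
  -- regroup the sum over `p` according to `y = p ⟨n⟩`-fibers
  have hfiber : ∀ y : S, X.μ x (E ∩ {ω | ω n = y})
      = ∑' p : {p : {p : Fin (n + 1) → S // ext' n p ∈ E} // ext' n p.1 n = y},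
          X.μ x (cyl n (ext' n p.1.1)) := by
    intro y
    have hU : E ∩ {ω | ω n = y}
        = ⋃ p : {p : {p : Fin (n + 1) → S // ext' n p ∈ E} // ext' n p.1 n = y},
            cyl n (ext' n p.1.1) := by
      ext ω
      constructor
      · rintro ⟨hω, hωn⟩
        refine Set.mem_iUnion.2 ⟨⟨⟨fun j => ω j.1, hE ω _ (hagree ω) hω⟩, ?_⟩, mem_cyl_self n ω⟩
        rw [← hagree ω n (le_refl n)]
        exact hωn
      · intro hω
        obtain ⟨p, hp⟩ := Set.mem_iUnion.1 hω
        refine ⟨hE (ext' n p.1.1) ω (fun i hi => (hp i hi).symm) p.1.2, ?_⟩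
        show ω n = y
        rw [hp n (le_refl n)]
        exact p.2
    rw [hU]
    exact measure_iUnion (fun p p' hpp' => cyl_disjoint
        (fun hc => hpp' (Subtype.ext (Subtype.ext hc))))
      (fun p => measurableSet_cyl _ _)
  calc
    ∑' p : {p : Fin (n + 1) → S // ext' n p ∈ E},
        X.μ x (cyl n (ext' n p.1)) * ∫⁻ ω', g ω' ∂(X.μ (ext' n p.1 n))
      = ∑' q : Σ y : S, {p : {p : Fin (n + 1) → S // ext' n p ∈ E} // ext' n p.1 n = y},
          X.μ x (cyl n (ext' n q.2.1.1)) * ∫⁻ ω', g ω' ∂(X.μ (ext' n q.2.1.1 n)) := by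
        refine (Equiv.tsum_eq (Equiv.sigmaFiberEquiv
          (fun p : {p : Fin (n + 1) → S // ext' n p ∈ E} => ext' n p.1 n))
          (fun p => X.μ x (cyl n (ext' n p.1)) * ∫⁻ ω', g ω' ∂(X.μ (ext' n p.1 n)))).symm
    _ = ∑' y : S, ∑' p : {p : {p : Fin (n + 1) → S // ext' n p ∈ E} // ext' n p.1 n = y},
          X.μ x (cyl n (ext' n p.1.1)) * ∫⁻ ω', g ω' ∂(X.μ (ext' n p.1.1 n)) :=
        ENNReal.tsum_sigma
          (β := fun y : S => {p : {p : Fin (n + 1) → S // ext' n p ∈ E} // ext' n p.1 n = y})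
          (fun y p => X.μ x (cyl n (ext' n p.1.1))
            * ∫⁻ ω', g ω' ∂(X.μ (ext' n p.1.1 n)))
    _ = ∑' y : S, X.μ x (E ∩ {ω | ω n = y}) * ∫⁻ ω', g ω' ∂(X.μ y) := by
        refine tsum_congr fun y => ?_
        rw [hfiber y, ← ENNReal.tsum_mul_right]
        exact tsum_congr fun p => by rw [p.2]

end KeyAux
namespace KeyAux

open MeasureTheory

variable {S : Type*} [DecidableEq S] [MeasurableSpace S] [Countable S]
  [MeasurableSingletonClass S]

lemma measurableSet_evalMem (n : ℕ) (B : Set S) : MeasurableSet {ω : ℕ → S | ω n ∈ B} := by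
  have h : {ω : ℕ → S | ω n ∈ B} = (fun ω : ℕ → S => ω n) ⁻¹' B := rfl
  rw [h]
  exact measurable_pi_apply n (measurableSet_S B)

lemma measurableSet_lt_hit (m j : ℕ) (B : Set S) :
    MeasurableSet {ω : ℕ → S | (j : ℕ∞) < hit m B ω} := by
  have h : {ω : ℕ → S | (j : ℕ∞) < hit m B ω}
      = ⋂ (i : ℕ) (_ : m ≤ i) (_ : i ≤ j), {ω : ℕ → S | ω i ∈ B}ᶜ := by
    ext ω
    simp only [Set.mem_iInter, Set.mem_setOf_eq, Set.mem_compl_iff, lt_hit_iff]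
  rw [h]
  exact MeasurableSet.iInter fun i => MeasurableSet.iInter fun _ =>
    MeasurableSet.iInter fun _ => (measurableSet_evalMem i B).compl

lemma measurableSet_le_hit (m n : ℕ) (B : Set S) :
    MeasurableSet {ω : ℕ → S | (n : ℕ∞) ≤ hit m B ω} := by
  have h : {ω : ℕ → S | (n : ℕ∞) ≤ hit m B ω}
      = ⋂ (i : ℕ) (_ : m ≤ i) (_ : i < n), {ω : ℕ → S | ω i ∈ B}ᶜ := by
    ext ω
    simp only [Set.mem_iInter, Set.mem_setOf_eq, Set.mem_compl_iff, le_hit_iff]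
  rw [h]
  exact MeasurableSet.iInter fun i => MeasurableSet.iInter fun _ =>
    MeasurableSet.iInter fun _ => (measurableSet_evalMem i B).compl

lemma measurableSet_hit_eq (m n : ℕ) (B : Set S) :
    MeasurableSet {ω : ℕ → S | hit m B ω = (n : ℕ∞)} := by
  have h : {ω : ℕ → S | hit m B ω = (n : ℕ∞)}
      = {ω : ℕ → S | (n : ℕ∞) ≤ hit m B ω}
          ∩ {ω : ℕ → S | ((n + 1 : ℕ) : ℕ∞) ≤ hit m B ω}ᶜ := by
    ext ω
    simp only [Set.mem_inter_iff, Set.mem_setOf_eq, Set.mem_compl_iff]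
    exact hit_eq_coe_iff'
  rw [h]
  exact (measurableSet_le_hit m n B).inter (measurableSet_le_hit m (n + 1) B).compl

lemma measurable_pathReward (q : S → ℝ) (τ : (ℕ → S) → ℕ∞)
    (h : ∀ j : ℕ, MeasurableSet {ω : ℕ → S | (j : ℕ∞) < τ ω}) :
    Measurable (pathReward q τ) := by
  refine Measurable.ennreal_tsum fun j => ?_
  exact Measurable.ite (h j)
    (ENNReal.measurable_ofReal.comp ((measurable_of_countable q).comp (measurable_pi_apply j)))
    measurable_const

lemma measurableSet_lt_sigma (K A : Finset S) (j : ℕ) :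
    MeasurableSet {ω : ℕ → S | (j : ℕ∞) < min (TKt K ω) (TA A ω)} := by
  have h : {ω : ℕ → S | (j : ℕ∞) < min (TKt K ω) (TA A ω)}
      = {ω : ℕ → S | (j : ℕ∞) < TKt K ω} ∩ {ω : ℕ → S | (j : ℕ∞) < TA A ω} := by
    ext ω; simp [lt_min_iff]
  rw [h]
  exact (measurableSet_lt_hit 1 j (K : Set S)).inter (measurableSet_lt_hit 0 j _)

lemma measurable_pathReward_sigma (q : S → ℝ) (K A : Finset S) :
    Measurable (pathReward q (fun ω => min (TKt K ω) (TA A ω))) :=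
  measurable_pathReward q _ (measurableSet_lt_sigma K A)

lemma measurable_pathReward_psiz (q : S → ℝ) (z : S) :
    Measurable (pathReward q (psiz z)) :=
  measurable_pathReward q _ (fun j => measurableSet_lt_hit 0 j {z})

lemma measurable_pathReward_TKt (q : S → ℝ) (K : Finset S) :
    Measurable (pathReward q (TKt K)) :=
  measurable_pathReward q _ (fun j => measurableSet_lt_hit 1 j (K : Set S))

lemma measurable_pathReward_truncTKt (q : S → ℝ) (K : Finset S) (n : ℕ) :
    Measurable (pathReward q (fun ω => min (n : ℕ∞) (TKt K ω))) := by
  refine measurable_pathReward q _ fun j => ?_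
  by_cases hj : (j : ℕ∞) < (n : ℕ∞)
  · have h : {ω : ℕ → S | (j : ℕ∞) < min (n : ℕ∞) (TKt K ω)}
        = {ω : ℕ → S | (j : ℕ∞) < TKt K ω} := by
      ext ω; simp [lt_min_iff, hj]
    rw [h]; exact measurableSet_lt_hit 1 j _
  · have h : {ω : ℕ → S | (j : ℕ∞) < min (n : ℕ∞) (TKt K ω)} = ∅ := by
      ext ω; simp [lt_min_iff, hj]
    rw [h]; exact MeasurableSet.empty

lemma mu_eval_zero (X : MC S) (x y : S) :
    X.μ x {ω | ω 0 = y} = if y = x then 1 else 0 := by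
  have h : {ω : ℕ → S | ω 0 = y} = cyl 0 (fun _ => y) := by
    ext ω
    simp [cyl, Nat.le_zero]
  rw [h, MC_cyl]
  simp

lemma mu_eval_one (X : MC S) (x y : S) :
    X.μ x {ω | ω 1 = y} = ENNReal.ofReal (X.P x y) := by
  classical
  have hU : {ω : ℕ → S | ω 1 = y} = ⋃ s : S, cyl 1 (fun j => if j = 0 then s else y) := by
    ext ω
    simp only [Set.mem_setOf_eq, Set.mem_iUnion]
    constructor
    · intro hω
      refine ⟨ω 0, fun i hi => ?_⟩
      interval_cases i
      · simp
      · simpa using hω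
    · rintro ⟨s, hs⟩
      simpa using hs 1 (le_refl 1)
  have hdisj : Pairwise (Function.onFun Disjoint
      fun s : S => cyl 1 (fun j => if j = 0 then s else y)) := by
    intro s s' hss'
    refine Set.disjoint_left.2 fun ω h1 h2 => hss' ?_
    have e1 := h1 0 (by omega)
    have e2 := h2 0 (by omega)
    simp at e1 e2
    rw [← e1, ← e2]
  rw [hU, measure_iUnion hdisj fun s => measurableSet_cyl _ _]
  have hterm : ∀ s : S, X.μ x (cyl 1 (fun j => if j = 0 then s else y))
      = if s = x then ENNReal.ofReal (X.P s y) else 0 := by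
    intro s
    rw [MC_cyl]
    simp
  rw [tsum_congr hterm, tsum_eq_single x (fun s hs => if_neg hs)]
  rw [if_pos rfl]

lemma ER_psiz_self (X : MC S) (q : S → ℝ) (z : S) : X.ER z q (psiz z) = 0 := by
  haveI := X.prob z
  have hae : ∀ᵐ ω ∂(X.μ z), ω 0 = z := by
    rw [ae_iff]
    have h : {ω : ℕ → S | ¬ ω 0 = z} = {ω : ℕ → S | ω 0 = z}ᶜ := rfl
    rw [h, measure_compl (measurableSet_evalEq 0 z) (measure_ne_top _ _), mu_eval_zero]
    simp
  have h0 : pathReward q (psiz z) =ᵐ[X.μ z] 0 := by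
    filter_upwards [hae] with ω hω
    have hψ := psiz_eq_zero hω
    simp [pathReward, hψ]
  unfold MC.ER
  rw [lintegral_congr_ae h0]
  simp

end KeyAux
namespace KeyAux

open MeasureTheory

variable {S : Type*} [DecidableEq S] [MeasurableSpace S] [Countable S]
  [MeasurableSingletonClass S]

lemma pathReward_const_one (q : S → ℝ) (τ : (ℕ → S) → ℕ∞) (ω : ℕ → S) (hτ : τ ω = 1) :
    pathReward q τ ω = ENNReal.ofReal (q (ω 0)) := by
  unfold pathReward
  rw [tsum_eq_single 0 ?_]
  · rw [hτ, if_pos (by exact_mod_cast Nat.zero_lt_one)]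
  · intro j hj
    rw [hτ, if_neg]
    intro hlt
    exact hj (by exact_mod_cast Nat.lt_one_iff.1 (by exact_mod_cast hlt))

lemma lyapunov_trunc (X : MC S) (K : Finset S) (q v : S → ℝ) (c : ℝ) (hq : ∀ x, 0 ≤ q x)
    (hA1 : X.A1 (K : Set S) q v c) :
    ∀ n : ℕ, ∀ x, x ∉ K →
      ∫⁻ ω, pathReward q (fun ω => min (n : ℕ∞) (TKt K ω)) ω ∂(X.μ x)
        ≤ ENNReal.ofReal (v x) := by
  classical
  obtain ⟨hv0, hsum, hdrift⟩ := hA1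
  intro n
  induction n with
  | zero =>
    intro x hx
    have h0 : ∀ ω : ℕ → S, pathReward q (fun ω => min ((0 : ℕ) : ℕ∞) (TKt K ω)) ω = 0 := by
      intro ω
      unfold pathReward
      have : ∀ j : ℕ, ¬ ((j : ℕ∞) < min ((0 : ℕ) : ℕ∞) (TKt K ω)) := by
        intro j
        simp
      simp only [this, if_false]
      exact tsum_zero
    rw [lintegral_congr h0]
    simp
  | succ n ih =>
    intro x hx
    have hpt : ∀ ω : ℕ → S,
        pathReward q (fun ω => min (((n + 1 : ℕ)) : ℕ∞) (TKt K ω)) ω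
          = ENNReal.ofReal (q (ω 0))
            + Set.indicator {ω' : ℕ → S | ω' 1 ∉ (K : Set S)}
                (fun ω' => pathReward q (fun ω'' => min ((n : ℕ) : ℕ∞) (TKt K ω''))
                  (shft 1 ω')) ω := by
      intro ω
      by_cases h1 : ω 1 ∈ K
      · rw [Set.indicator_of_notMem (by simpa using h1), add_zero]
        refine pathReward_const_one q _ ω ?_
        rw [TKt_eq_one h1]
        exact min_eq_right (by exact_mod_cast Nat.succ_le_succ (Nat.zero_le n))
      · rw [Set.indicator_of_mem (by simpa using h1)]
        have hsplit : min (((n + 1 : ℕ)) : ℕ∞) (TKt K ω)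
            = ((1 : ℕ) : ℕ∞) + min ((n : ℕ) : ℕ∞) (TKt K (shft 1 ω)) := by
          rw [TKt_shift h1,
            show (((n + 1 : ℕ)) : ℕ∞) = (1 : ℕ∞) + (n : ℕ∞) by push_cast; ring]
          rw [min_add_add_left]
          norm_cast
        have h' : (fun _ : ℕ → S => ((1 : ℕ) : ℕ∞)) ω = ((1 : ℕ) : ℕ∞) := rfl
        rw [pathReward_split (q := q)
          (τ := fun ω => min (((n + 1 : ℕ)) : ℕ∞) (TKt K ω))
          (τ' := fun _ => ((1 : ℕ) : ℕ∞))
          (τ'' := fun ω'' => min ((n : ℕ) : ℕ∞) (TKt K ω'')) hsplit h']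
        congr 1
        refine pathReward_const_one q _ ω ?_
        norm_cast
    have hmf : Measurable fun ω : ℕ → S => ENNReal.ofReal (q (ω 0)) :=
      ENNReal.measurable_ofReal.comp ((measurable_of_countable q).comp (measurable_pi_apply 0))
    rw [lintegral_congr hpt, lintegral_add_left hmf]
    have hfirst : ∫⁻ ω, ENNReal.ofReal (q (ω 0)) ∂(X.μ x) = ENNReal.ofReal (q x) := by
      have h := lintegral_indicator_eval (X.μ x) MeasurableSet.univ 0
        (fun y => ENNReal.ofReal (q y))
      simp only [Set.indicator_univ, Set.univ_inter] at h
      rw [h]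
      have hterm : ∀ y : S, X.μ x {ω | ω 0 = y} * ENNReal.ofReal (q y)
          = if y = x then ENNReal.ofReal (q y) else 0 := by
        intro y
        rw [mu_eval_zero]
        by_cases hy : y = x
        · rw [if_pos hy, if_pos hy, one_mul]
        · rw [if_neg hy, if_neg hy, zero_mul]
      rw [tsum_congr hterm, tsum_eq_single x (fun y hy => if_neg hy), if_pos rfl]
    rw [hfirst]
    have hE : ∀ ω ω' : ℕ → S, (∀ i ≤ 1, ω i = ω' i)
        → ω ∈ {ω' : ℕ → S | ω' 1 ∉ (K : Set S)} → ω' ∈ {ω' : ℕ → S | ω' 1 ∉ (K : Set S)} := by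
      intro ω ω' hag hω
      simp only [Set.mem_setOf_eq] at hω ⊢
      rw [← hag 1 (le_refl 1)]
      exact hω
    rw [markov_decomp X x 1 hE (measurable_pathReward_truncTKt q K n)]
    have hterm2 : ∀ y : S,
        X.μ x ({ω' : ℕ → S | ω' 1 ∉ (K : Set S)} ∩ {ω | ω 1 = y})
            * ∫⁻ ω', pathReward q (fun ω'' => min ((n : ℕ) : ℕ∞) (TKt K ω'')) ω' ∂(X.μ y)
          ≤ ENNReal.ofReal (X.P x y * v y) := by
      intro y
      by_cases hy : y ∈ K
      · have hempty : {ω' : ℕ → S | ω' 1 ∉ (K : Set S)} ∩ {ω : ℕ → S | ω 1 = y} = ∅ := by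
          ext ω
          simp only [Set.mem_inter_iff, Set.mem_setOf_eq, Set.mem_empty_iff_false, iff_false]
          rintro ⟨h1, h2⟩
          exact h1 (by rw [h2]; exact_mod_cast hy)
        rw [hempty, measure_empty, zero_mul]
        exact zero_le
      · have heq : {ω' : ℕ → S | ω' 1 ∉ (K : Set S)} ∩ {ω : ℕ → S | ω 1 = y}
            = {ω : ℕ → S | ω 1 = y} := by
          refine Set.inter_eq_self_of_subset_right fun ω hω => ?_
          simp only [Set.mem_setOf_eq] at hω ⊢
          rw [hω]
          exact_mod_cast hy
        rw [heq, mu_eval_one, ENNReal.ofReal_mul (X.nonneg x y)]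
        exact mul_le_mul_right (ih y hy) _
    have hdx : ∑' y : S, X.P x y * v y ≤ v x - q x := by
      have h := hdrift x
      rwa [Set.indicator_of_notMem (by exact_mod_cast hx), add_zero] at h
    have hvq : 0 ≤ v x - q x :=
      le_trans (tsum_nonneg fun y => mul_nonneg (X.nonneg x y) (hv0 y)) hdx
    have hA : (∑' y : S, ENNReal.ofReal (X.P x y * v y))
        ≤ ENNReal.ofReal (v x - q x) := by
      rw [← ENNReal.ofReal_tsum_of_nonneg (fun y => mul_nonneg (X.nonneg x y) (hv0 y))
        (hsum x)]
      exact ENNReal.ofReal_le_ofReal hdx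
    calc ENNReal.ofReal (q x)
          + ∑' y : S, X.μ x ({ω' : ℕ → S | ω' 1 ∉ (K : Set S)} ∩ {ω | ω 1 = y})
            * ∫⁻ ω', pathReward q (fun ω'' => min ((n : ℕ) : ℕ∞) (TKt K ω'')) ω' ∂(X.μ y)
        ≤ ENNReal.ofReal (q x) + ENNReal.ofReal (v x - q x) := by
          exact add_le_add_right (le_trans (Summable.tsum_le_tsum hterm2
            ENNReal.summable ENNReal.summable) hA) _
      _ = ENNReal.ofReal (v x) := by
          rw [← ENNReal.ofReal_add (hq x) hvq]
          ring_nf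

lemma pathReward_TKt_iSup (q : S → ℝ) (K : Finset S) (ω : ℕ → S) :
    pathReward q (TKt K) ω
      = ⨆ n : ℕ, pathReward q (fun ω' => min ((n : ℕ) : ℕ∞) (TKt K ω')) ω := by
  refine le_antisymm ?_ (iSup_le fun n => pathReward_mono (min_le_right _ _))
  unfold pathReward
  rw [ENNReal.tsum_eq_iSup_sum]
  refine iSup_le fun s => ?_
  set N := (s.sup id) + 1 with hN
  refine le_trans ?_ (le_iSup _ N)
  refine le_trans (le_of_eq (Finset.sum_congr rfl fun j hj => ?_))
    (ENNReal.sum_le_tsum s)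
  have hjN : (j : ℕ∞) < ((N : ℕ) : ℕ∞) := by
    have : j ≤ s.sup id := Finset.le_sup (f := id) hj
    exact_mod_cast Nat.lt_succ_of_le this
  by_cases hlt : (j : ℕ∞) < TKt K ω
  · rw [if_pos hlt, if_pos (lt_min hjN hlt)]
  · rw [if_neg hlt, if_neg (fun hc => hlt (lt_of_lt_of_le hc (min_le_right _ _)))]

lemma lyapunov (X : MC S) (K : Finset S) (q v : S → ℝ) (c : ℝ) (hq : ∀ x, 0 ≤ q x)
    (hA1 : X.A1 (K : Set S) q v c) :
    ∀ x, x ∉ K → X.ER x q (TKt K) ≤ ENNReal.ofReal (v x) := by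
  intro x hx
  unfold MC.ER
  rw [lintegral_congr (pathReward_TKt_iSup q K)]
  rw [lintegral_iSup (fun n => measurable_pathReward_truncTKt q K n)
    (fun a b hab => fun ω => pathReward_mono (min_le_min (by exact_mod_cast hab) (le_refl _)))]
  exact iSup_le fun n => lyapunov_trunc X K q v c hq hA1 n x hx

end KeyAux
namespace KeyAux

open MeasureTheory

variable {S : Type*} [DecidableEq S] [MeasurableSpace S] [Countable S]
  [MeasurableSingletonClass S]

lemma tsum_measure_inter_eval (μ : Measure (ℕ → S)) {E : Set (ℕ → S)}
    (hE : MeasurableSet E) (n : ℕ) :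
    ∑' w : S, μ (E ∩ {ω | ω n = w}) = μ E := by
  have hU : E = ⋃ w : S, E ∩ {ω | ω n = w} := by ext ω; simp
  have hdisj : Pairwise (Function.onFun Disjoint fun w : S => E ∩ {ω | ω n = w}) := by
    intro w w' hww'
    refine Set.disjoint_left.2 fun ω h1 h2 => hww' ?_
    rw [← h1.2, ← h2.2]
  conv_rhs => rw [hU]
  exact (measure_iUnion hdisj fun w => hE.inter (measurableSet_evalEq n w)).symm

lemma hit_det (m n : ℕ) (B : Set S) (ω ω' : ℕ → S) (hag : ∀ i ≤ n, ω i = ω' i)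
    (hω : hit m B ω = (n : ℕ∞)) : hit m B ω' = (n : ℕ∞) := by
  rw [hit_eq_coe_iff] at hω ⊢
  obtain ⟨h1, h2, h3⟩ := hω
  refine ⟨h1, by rw [← hag n (le_refl n)]; exact h2, fun i hi hin hB => ?_⟩
  exact h3 i hi hin (by rw [hag i hin.le]; exact hB)

lemma measurable_indicator_hit_shift (q : S → ℝ) (z : S) (m : ℕ) (B : Set S) (n : ℕ) :
    Measurable fun ω : ℕ → S => Set.indicator {ω' : ℕ → S | hit m B ω' = (n : ℕ∞)}
      (fun ω' => pathReward q (psiz z) (shft n ω')) ω := by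
  have h : MeasurableSet {ω' : ℕ → S | hit m B ω' = (n : ℕ∞)} := measurableSet_hit_eq m n B
  exact ((measurable_pathReward_psiz q z).comp (measurable_shft n)).indicator h

/-- Any state outside `K`: expected reward until hitting `z` is at most `v + M`,
where `M` bounds the value on `K`. -/
lemma ER_psiz_le_off_K (X : MC S) (K : Finset S) (z : S) (q v : S → ℝ) (c : ℝ)
    (hq : ∀ x, 0 ≤ q x) (hA1 : X.A1 (K : Set S) q v c) (M : ℝ≥0∞)
    (hM : ∀ w ∈ K, X.ER w q (psiz z) ≤ M) :
    ∀ y, y ∉ K → X.ER y q (psiz z) ≤ ENNReal.ofReal (v y) + M := by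
  intro y hy
  haveI := X.prob y
  have hpw : ∀ ω, pathReward q (psiz z) ω ≤ pathReward q (TKt K) ω
      + ∑' n : ℕ, Set.indicator {ω' : ℕ → S | TKt K ω' = (n : ℕ∞)}
          (fun ω' => pathReward q (psiz z) (shft n ω')) ω :=
    fun ω => pathReward_le_split z (TKt K) ω
  show ∫⁻ ω, pathReward q (psiz z) ω ∂(X.μ y) ≤ _
  refine le_trans (lintegral_mono hpw) ?_
  rw [lintegral_add_left (measurable_pathReward_TKt q K)]
  refine add_le_add (lyapunov X K q v c hq hA1 y hy) ?_
  have hmeas : ∀ n : ℕ, Measurable fun ω : ℕ → S =>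
      Set.indicator {ω' : ℕ → S | TKt K ω' = (n : ℕ∞)}
        (fun ω' => pathReward q (psiz z) (shft n ω')) ω :=
    fun n => measurable_indicator_hit_shift q z 1 (K : Set S) n
  rw [lintegral_tsum (fun n => (hmeas n).aemeasurable)]
  have hterm : ∀ n : ℕ,
      ∫⁻ ω, Set.indicator {ω' : ℕ → S | TKt K ω' = (n : ℕ∞)}
          (fun ω' => pathReward q (psiz z) (shft n ω')) ω ∂(X.μ y)
        ≤ X.μ y {ω' : ℕ → S | TKt K ω' = (n : ℕ∞)} * M := by
    intro n
    rw [markov_decomp X y n (E := {ω' : ℕ → S | TKt K ω' = (n : ℕ∞)})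
      (fun ω ω' hag hω => hit_det 1 n (K : Set S) ω ω' hag hω)
      (measurable_pathReward_psiz q z)]
    have hbd : ∀ w : S,
        X.μ y ({ω' : ℕ → S | TKt K ω' = (n : ℕ∞)} ∩ {ω | ω n = w})
            * ∫⁻ ω', pathReward q (psiz z) ω' ∂(X.μ w)
          ≤ X.μ y ({ω' : ℕ → S | TKt K ω' = (n : ℕ∞)} ∩ {ω | ω n = w}) * M := by
      intro w
      by_cases hw : w ∈ K
      · exact mul_le_mul_right (hM w hw) _
      · have hempty : {ω' : ℕ → S | TKt K ω' = (n : ℕ∞)} ∩ {ω : ℕ → S | ω n = w} = ∅ := by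
          ext ω
          simp only [Set.mem_inter_iff, Set.mem_setOf_eq, Set.mem_empty_iff_false, iff_false]
          rintro ⟨h1, h2⟩
          have := (hit_eq_coe_iff.1 h1).2.1
          rw [h2] at this
          exact hw (by exact_mod_cast this)
        rw [hempty, measure_empty, zero_mul, zero_mul]
    refine le_trans (Summable.tsum_le_tsum hbd ENNReal.summable ENNReal.summable) ?_
    rw [ENNReal.tsum_mul_right,
      tsum_measure_inter_eval (X.μ y) (E := {ω' : ℕ → S | TKt K ω' = (n : ℕ∞)})
        (measurableSet_hit_eq 1 n (K : Set S)) n]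
  refine le_trans (Summable.tsum_le_tsum hterm ENNReal.summable ENNReal.summable) ?_
  rw [ENNReal.tsum_mul_right]
  have hdisj : Pairwise (Function.onFun Disjoint
      fun n : ℕ => {ω' : ℕ → S | TKt K ω' = (n : ℕ∞)}) := by
    intro n n' hnn'
    refine Set.disjoint_left.2 fun ω h1 h2 => hnn' ?_
    have : ((n : ℕ∞)) = (n' : ℕ∞) := by rw [← h1, ← h2]
    exact_mod_cast this
  have hle1 : (∑' n : ℕ, X.μ y {ω' : ℕ → S | TKt K ω' = (n : ℕ∞)}) ≤ 1 := by
    rw [← measure_iUnion hdisj fun n => measurableSet_hit_eq 1 n (K : Set S)]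
    exact le_trans (measure_mono (Set.subset_univ _)) (le_of_eq measure_univ)
  exact le_trans (mul_le_mul_left hle1 M) (by rw [one_mul])

end KeyAux
namespace KeyAux

open MeasureTheory

variable {S : Type*} [DecidableEq S] [MeasurableSpace S] [Countable S]
  [MeasurableSingletonClass S]

lemma min_eq_coe_iff {a b c : ℕ∞} :
    min a b = c ↔ (a = c ∧ c ≤ b) ∨ (b = c ∧ c ≤ a) := by
  constructor
  · intro h
    rcases le_total a b with hab | hab
    · left
      rw [min_eq_left hab] at h
      exact ⟨h, h ▸ hab⟩
    · right
      rw [min_eq_right hab] at h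
      exact ⟨h, h ▸ hab⟩
  · rintro (⟨rfl, h⟩ | ⟨rfl, h⟩)
    · exact min_eq_left h
    · exact min_eq_right h

lemma hit_le_det {m n : ℕ} {B : Set S} {ω ω' : ℕ → S} (hag : ∀ i ≤ n, ω i = ω' i)
    (h : (n : ℕ∞) ≤ hit m B ω) : (n : ℕ∞) ≤ hit m B ω' := by
  rw [le_hit_iff] at h ⊢
  intro i hmi hin hB
  exact h i hmi hin (by rw [hag i hin.le]; exact hB)

lemma sigma_det (K A : Finset S) (n : ℕ) (ω ω' : ℕ → S) (hag : ∀ i ≤ n, ω i = ω' i)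
    (h : min (TKt K ω) (TA A ω) = (n : ℕ∞)) :
    min (TKt K ω') (TA A ω') = (n : ℕ∞) := by
  rw [min_eq_coe_iff] at h ⊢
  rcases h with ⟨h1, h2⟩ | ⟨h1, h2⟩
  · exact Or.inl ⟨hit_det 1 n _ ω ω' hag h1, hit_le_det hag h2⟩
  · exact Or.inr ⟨hit_det 0 n _ ω ω' hag h1, hit_le_det hag h2⟩

lemma measurableSet_sigma_eq (K A : Finset S) (n : ℕ) :
    MeasurableSet {ω : ℕ → S | min (TKt K ω) (TA A ω) = (n : ℕ∞)} := by
  have h : {ω : ℕ → S | min (TKt K ω) (TA A ω) = (n : ℕ∞)}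
      = ({ω : ℕ → S | hit 1 (K : Set S) ω = (n : ℕ∞)}
            ∩ {ω : ℕ → S | (n : ℕ∞) ≤ hit 0 ((A : Set S))ᶜ ω})
        ∪ ({ω : ℕ → S | hit 0 ((A : Set S))ᶜ ω = (n : ℕ∞)}
            ∩ {ω : ℕ → S | (n : ℕ∞) ≤ hit 1 (K : Set S) ω}) := by
    ext ω
    simp only [Set.mem_setOf_eq, Set.mem_union, Set.mem_inter_iff]
    exact min_eq_coe_iff
  rw [h]
  exact ((measurableSet_hit_eq 1 n _).inter (measurableSet_le_hit 0 n _)).union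
    ((measurableSet_hit_eq 0 n _).inter (measurableSet_le_hit 1 n _))

lemma measurableSet_TA_eq_lt_TKt (K A : Finset S) (n : ℕ) :
    MeasurableSet {ω : ℕ → S | TA A ω = (n : ℕ∞) ∧ (n : ℕ∞) < TKt K ω} := by
  have h : {ω : ℕ → S | TA A ω = (n : ℕ∞) ∧ (n : ℕ∞) < TKt K ω}
      = {ω : ℕ → S | hit 0 ((A : Set S))ᶜ ω = (n : ℕ∞)}
        ∩ {ω : ℕ → S | (n : ℕ∞) < hit 1 (K : Set S) ω} := rfl
  rw [h]
  exact (measurableSet_hit_eq 0 n _).inter (measurableSet_lt_hit 1 n _)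

lemma sigma_eq_of_TA (K A : Finset S) {n : ℕ} {ω : ℕ → S}
    (h : TA A ω = (n : ℕ∞) ∧ (n : ℕ∞) < TKt K ω) :
    min (TKt K ω) (TA A ω) = (n : ℕ∞) :=
  min_eq_coe_iff.2 (Or.inr ⟨h.1, le_of_lt h.2⟩)

end KeyAux

open KeyAux

/-- **The key inequality (7) on `K̃`.** For an irreducible recurrent chain,
finite `K ⊆ A ⊆ S`, `z ∈ K`, and `q : S → ℝ₊` satisfying A1(q) with Lyapunov
function `v`: with `f(x) = 𝔼_x Σ_{j=0}^{ψ(z)-1} q(X_j)`,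
`G(x,y) = ℙ_x(X_{T_K} = y, T_K < T)`, `ξ(x) = ℙ_x(T < T_K)`,
`k(x,q) = 𝔼_x Σ_{j=0}^{(T_K∧T)-1} q(X_j)`, `k̃'(x,q) = 𝔼_x[v(X_T); T < T_K]`
and `β = k + k̃'`, one has for every `x ∈ K̃ = K \ {z}`:
`f(x) ≤ β(x,q) + Σ_{y ∈ K̃} G(x,y) f(y) + ξ(x)·max_{w ∈ K̃} f(w)`. -/
theorem key_inequality_on_Ktilde
    [Countable S] [MeasurableSingletonClass S]
    (X : MC S) (hirr : X.Irreducible) (hrec : X.Recurrent)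
    (K A : Finset S) (hKA : K ⊆ A) (z : S) (hz : z ∈ K)
    (q v : S → ℝ) (c : ℝ) (hq : ∀ x, 0 ≤ q x)
    (hA1 : X.A1 (K : Set S) q v c) :
    ∀ x ∈ K.erase z,
      X.ER x q (psiz z)
        ≤ X.ER x q (fun ω => min (TKt K ω) (TA A ω))
          + (∫⁻ ω, (if TA A ω < TKt K ω then ENNReal.ofReal (v (evalAt ω (TA A ω))) else 0)
              ∂ X.μ x)
          + (∑ y ∈ K.erase z,
              X.μ x {ω | TKt K ω < TA A ω ∧ evalAt ω (TKt K ω) = y} * X.ER y q (psiz z))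
          + X.μ x {ω | TA A ω < TKt K ω} * (K.erase z).sup (fun w => X.ER w q (psiz z)) := by
  classical
  intro x hx
  obtain ⟨hxz, hxK⟩ := Finset.mem_erase.1 hx
  haveI := X.prob x
  set M := (K.erase z).sup (fun w => X.ER w q (psiz z)) with hMdef
  have hfz : X.ER z q (psiz z) = 0 := ER_psiz_self X q z
  have hMK : ∀ w ∈ K, X.ER w q (psiz z) ≤ M := by
    intro w hw
    by_cases hwz : w = z
    · rw [hwz, hfz]; exact zero_le
    · exact Finset.le_sup (f := fun w => X.ER w q (psiz z)) (Finset.mem_erase.2 ⟨hwz, hw⟩)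
  have hoffA : ∀ y, y ∉ A → X.ER y q (psiz z) ≤ ENNReal.ofReal (v y) + M :=
    fun y hy => ER_psiz_le_off_K X K z q v c hq hA1 M hMK y (fun hyK => hy (hKA hyK))
  -- Step 1: split at σ = min(T_K, T)
  have hstep1 : X.ER x q (psiz z)
      ≤ X.ER x q (fun ω => min (TKt K ω) (TA A ω))
        + ∑' n : ℕ, ∑' y : S,
            X.μ x ({ω : ℕ → S | min (TKt K ω) (TA A ω) = (n : ℕ∞)} ∩ {ω | ω n = y})
              * X.ER y q (psiz z) := by
    have hpw : ∀ ω, pathReward q (psiz z) ω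
        ≤ pathReward q (fun ω => min (TKt K ω) (TA A ω)) ω
          + ∑' n : ℕ, Set.indicator {ω' : ℕ → S | min (TKt K ω') (TA A ω') = (n : ℕ∞)}
              (fun ω' => pathReward q (psiz z) (shft n ω')) ω :=
      fun ω => pathReward_le_split z _ ω
    show ∫⁻ ω, pathReward q (psiz z) ω ∂(X.μ x) ≤ _
    refine le_trans (lintegral_mono hpw) ?_
    rw [lintegral_add_left (measurable_pathReward_sigma q K A)]
    refine add_le_add_right (le_of_eq ?_) _
    have hmeasn : ∀ n : ℕ, Measurable fun ω : ℕ → S =>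
        Set.indicator {ω' : ℕ → S | min (TKt K ω') (TA A ω') = (n : ℕ∞)}
          (fun ω' => pathReward q (psiz z) (shft n ω')) ω :=
      fun n => ((measurable_pathReward_psiz q z).comp
        (measurable_shft n)).indicator (measurableSet_sigma_eq K A n)
    rw [lintegral_tsum (fun n => (hmeasn n).aemeasurable)]
    exact tsum_congr fun n => markov_decomp X x n
      (E := {ω : ℕ → S | min (TKt K ω) (TA A ω) = (n : ℕ∞)})
      (sigma_det K A n) (measurable_pathReward_psiz q z)
  -- Step 2: termwise bound of the values at time σ
  have hbnd : ∀ (n : ℕ) (y : S),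
      X.μ x ({ω : ℕ → S | min (TKt K ω) (TA A ω) = (n : ℕ∞)} ∩ {ω | ω n = y})
          * X.ER y q (psiz z)
        ≤ X.μ x ({ω : ℕ → S | min (TKt K ω) (TA A ω) = (n : ℕ∞)} ∩ {ω | ω n = y})
            * ((if y ∈ K.erase z then X.ER y q (psiz z) else 0)
              + (if y ∈ A then 0 else ENNReal.ofReal (v y) + M)) := by
    intro n y
    by_cases hyK' : y ∈ K.erase z
    · refine mul_le_mul_right ?_ _
      rw [if_pos hyK', if_pos (hKA (Finset.mem_of_mem_erase hyK')), add_zero]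
    · by_cases hyz : y = z
      · subst hyz
        rw [hfz, mul_zero]
        exact zero_le
      · by_cases hyA : y ∈ A
        · have hyK : y ∉ K := fun h => hyK' (Finset.mem_erase.2 ⟨hyz, h⟩)
          have hempty : {ω : ℕ → S | min (TKt K ω) (TA A ω) = (n : ℕ∞)}
              ∩ {ω : ℕ → S | ω n = y} = ∅ := by
            ext ω
            simp only [Set.mem_inter_iff, Set.mem_setOf_eq, Set.mem_empty_iff_false, iff_false]
            rintro ⟨h1, h2⟩
            rcases min_eq_coe_iff.1 h1 with ⟨hKeq, _⟩ | ⟨hAeq, _⟩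
            · have := (hit_eq_coe_iff.1 hKeq).2.1
              rw [h2] at this
              exact hyK (by exact_mod_cast this)
            · have := (hit_eq_coe_iff.1 hAeq).2.1
              rw [h2] at this
              exact this (by exact_mod_cast hyA)
          rw [hempty, measure_empty, zero_mul, zero_mul]
        · refine mul_le_mul_right ?_ _
          rw [if_neg hyK', if_neg hyA, zero_add]
          exact hoffA y hyA
  -- Step 3: the event at time σ with a value in K̃ is contained in {T_K < T}
  have hI : (∑' n : ℕ, ∑' y : S,
        X.μ x ({ω : ℕ → S | min (TKt K ω) (TA A ω) = (n : ℕ∞)} ∩ {ω | ω n = y})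
          * (if y ∈ K.erase z then X.ER y q (psiz z) else 0))
      ≤ ∑ y ∈ K.erase z,
          X.μ x {ω | TKt K ω < TA A ω ∧ evalAt ω (TKt K ω) = y} * X.ER y q (psiz z) := by
    rw [ENNReal.tsum_comm]
    have hzero : ∀ y ∉ K.erase z, (∑' n : ℕ,
        X.μ x ({ω : ℕ → S | min (TKt K ω) (TA A ω) = (n : ℕ∞)} ∩ {ω | ω n = y})
          * (if y ∈ K.erase z then X.ER y q (psiz z) else 0)) = 0 := by
      intro y hy
      have hz0 : ∀ n : ℕ,
          X.μ x ({ω : ℕ → S | min (TKt K ω) (TA A ω) = (n : ℕ∞)} ∩ {ω | ω n = y})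
            * (if y ∈ K.erase z then X.ER y q (psiz z) else 0) = 0 := by
        intro n
        rw [if_neg hy, mul_zero]
      rw [tsum_congr hz0]
      exact tsum_zero
    rw [tsum_eq_sum hzero]
    refine Finset.sum_le_sum fun y hy => ?_
    have h1 : ∀ n : ℕ,
        X.μ x ({ω : ℕ → S | min (TKt K ω) (TA A ω) = (n : ℕ∞)} ∩ {ω | ω n = y})
            * (if y ∈ K.erase z then X.ER y q (psiz z) else 0)
          = X.μ x ({ω : ℕ → S | min (TKt K ω) (TA A ω) = (n : ℕ∞)} ∩ {ω | ω n = y})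
            * X.ER y q (psiz z) := fun n => by rw [if_pos hy]
    rw [tsum_congr h1, ENNReal.tsum_mul_right]
    refine mul_le_mul_left ?_ _
    have hdisj : Pairwise (Function.onFun Disjoint fun n : ℕ =>
        {ω : ℕ → S | min (TKt K ω) (TA A ω) = (n : ℕ∞)} ∩ {ω | ω n = y}) := by
      intro n n' hnn'
      refine Set.disjoint_left.2 fun ω h1 h2 => hnn' ?_
      have : ((n : ℕ∞)) = (n' : ℕ∞) := by rw [← h1.1, ← h2.1]
      exact_mod_cast this
    rw [← measure_iUnion hdisj
      (fun n => (measurableSet_sigma_eq K A n).inter (measurableSet_evalEq n y))]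
    refine measure_mono ?_
    rintro ω hω
    obtain ⟨n, hn⟩ := Set.mem_iUnion.1 hω
    obtain ⟨h1, h2⟩ := hn
    have hyA : y ∈ (A : Set S) := by exact_mod_cast hKA (Finset.mem_of_mem_erase hy)
    rcases min_eq_coe_iff.1 h1 with ⟨hKeq, hle⟩ | ⟨hAeq, _⟩
    · have hTAne : TA A ω ≠ (n : ℕ∞) := by
        intro hc
        have := (hit_eq_coe_iff.1 hc).2.1
        rw [h2] at this
        exact this hyA
      refine ⟨?_, ?_⟩
      · rw [hKeq]
        exact lt_of_le_of_ne hle (fun hc => hTAne hc.symm)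
      · rw [hKeq]
        show ω ((n : ℕ∞)).toNat = y
        simpa using h2
    · exfalso
      have := (hit_eq_coe_iff.1 hAeq).2.1
      rw [h2] at this
      exact this hyA
  -- Step 4: the events at time σ with a value outside A
  have hEG : ∀ (n : ℕ) (y : S), y ∉ A →
      {ω : ℕ → S | min (TKt K ω) (TA A ω) = (n : ℕ∞)} ∩ {ω | ω n = y}
        = {ω : ℕ → S | TA A ω = (n : ℕ∞) ∧ (n : ℕ∞) < TKt K ω} ∩ {ω | ω n = y} := by
    intro n y hyA
    ext ω
    simp only [Set.mem_inter_iff, Set.mem_setOf_eq, and_congr_left_iff]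
    intro h2
    constructor
    · intro h1
      rcases min_eq_coe_iff.1 h1 with ⟨hKeq, _⟩ | ⟨hAeq, hle⟩
      · exfalso
        have := (hit_eq_coe_iff.1 hKeq).2.1
        rw [h2] at this
        exact hyA (by exact_mod_cast hKA (by exact_mod_cast this))
      · refine ⟨hAeq, lt_of_le_of_ne hle ?_⟩
        intro hc
        have := (hit_eq_coe_iff.1 hc.symm).2.1
        rw [h2] at this
        exact hyA (by exact_mod_cast hKA (by exact_mod_cast this))
    · exact fun h => sigma_eq_of_TA K A h
  have hII : (∑' n : ℕ, ∑' y : S,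
        X.μ x ({ω : ℕ → S | min (TKt K ω) (TA A ω) = (n : ℕ∞)} ∩ {ω | ω n = y})
          * (if y ∈ A then 0 else ENNReal.ofReal (v y) + M))
      ≤ (∫⁻ ω, (if TA A ω < TKt K ω then ENNReal.ofReal (v (evalAt ω (TA A ω))) else 0)
            ∂ X.μ x)
        + X.μ x {ω | TA A ω < TKt K ω} * M := by
    have hstep : ∀ (n : ℕ) (y : S),
        X.μ x ({ω : ℕ → S | min (TKt K ω) (TA A ω) = (n : ℕ∞)} ∩ {ω | ω n = y})
            * (if y ∈ A then 0 else ENNReal.ofReal (v y) + M)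
          ≤ X.μ x ({ω : ℕ → S | TA A ω = (n : ℕ∞) ∧ (n : ℕ∞) < TKt K ω} ∩ {ω | ω n = y})
              * ENNReal.ofReal (v y)
            + X.μ x ({ω : ℕ → S | TA A ω = (n : ℕ∞) ∧ (n : ℕ∞) < TKt K ω} ∩ {ω | ω n = y})
              * M := by
      intro n y
      by_cases hyA : y ∈ A
      · rw [if_pos hyA, mul_zero]
        exact zero_le
      · rw [if_neg hyA, hEG n y hyA, mul_add]
    refine le_trans (Summable.tsum_le_tsum (fun n => Summable.tsum_le_tsum (hstep n)
      ENNReal.summable ENNReal.summable) ENNReal.summable ENNReal.summable) ?_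
    rw [tsum_congr (fun n : ℕ => ENNReal.tsum_add (f := fun y : S =>
      X.μ x ({ω : ℕ → S | TA A ω = (n : ℕ∞) ∧ (n : ℕ∞) < TKt K ω} ∩ {ω | ω n = y})
        * ENNReal.ofReal (v y)) (g := fun y : S =>
      X.μ x ({ω : ℕ → S | TA A ω = (n : ℕ∞) ∧ (n : ℕ∞) < TKt K ω} ∩ {ω | ω n = y}) * M)),
      ENNReal.tsum_add]
    refine add_le_add (le_of_eq ?_) (le_of_eq ?_)
    · -- equals the k̃' integral
      have hptw : ∀ ω : ℕ → S,
          (if TA A ω < TKt K ω then ENNReal.ofReal (v (evalAt ω (TA A ω))) else 0)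
            = ∑' n : ℕ, Set.indicator
                {ω' : ℕ → S | TA A ω' = (n : ℕ∞) ∧ (n : ℕ∞) < TKt K ω'}
                (fun ω' => ENNReal.ofReal (v (ω' n))) ω := by
        intro ω
        by_cases h : TA A ω < TKt K ω
        · obtain ⟨n, hn⟩ := WithTop.ne_top_iff_exists.1 (ne_top_of_lt h)
          rw [if_pos h, tsum_eq_single n ?_]
          · rw [Set.indicator_of_mem
              (by exact ⟨hn.symm, lt_of_le_of_lt (le_of_eq hn) h⟩ :
                ω ∈ {ω' : ℕ → S | TA A ω' = (n : ℕ∞) ∧ (n : ℕ∞) < TKt K ω'})]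
            rw [← hn]
            show ENNReal.ofReal (v (ω ((n : ℕ∞)).toNat)) = _
            simp
          · intro n' hn'
            refine Set.indicator_of_notMem (fun hc => hn' ?_) _
            have h2 : ((n' : ℕ∞)) = (n : ℕ∞) := hc.1.symm.trans hn.symm
            exact_mod_cast h2
        · rw [if_neg h]
          symm
          refine ENNReal.tsum_eq_zero.2 fun n => ?_
          refine Set.indicator_of_notMem (fun hc => h ?_) _
          rw [hc.1]
          exact hc.2
      have hmeasn2 : ∀ n : ℕ, Measurable fun ω : ℕ → S =>
          Set.indicator {ω' : ℕ → S | TA A ω' = (n : ℕ∞) ∧ (n : ℕ∞) < TKt K ω'}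
            (fun ω' => ENNReal.ofReal (v (ω' n))) ω :=
        fun n => (ENNReal.measurable_ofReal.comp ((measurable_of_countable v).comp
          (measurable_pi_apply n))).indicator (measurableSet_TA_eq_lt_TKt K A n)
      rw [lintegral_congr hptw, lintegral_tsum (fun n => (hmeasn2 n).aemeasurable)]
      exact (tsum_congr fun n => lintegral_indicator_eval (X.μ x)
        (measurableSet_TA_eq_lt_TKt K A n) n (fun y => ENNReal.ofReal (v y))).symm
    · -- equals ξ(x) * M
      have h1 : ∀ n : ℕ, (∑' y : S,
          X.μ x ({ω : ℕ → S | TA A ω = (n : ℕ∞) ∧ (n : ℕ∞) < TKt K ω} ∩ {ω | ω n = y}) * M)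
            = X.μ x {ω : ℕ → S | TA A ω = (n : ℕ∞) ∧ (n : ℕ∞) < TKt K ω} * M := by
        intro n
        rw [ENNReal.tsum_mul_right, tsum_measure_inter_eval (X.μ x)
          (measurableSet_TA_eq_lt_TKt K A n) n]
      rw [tsum_congr h1, ENNReal.tsum_mul_right]
      congr 1
      have hdisj : Pairwise (Function.onFun Disjoint fun n : ℕ =>
          {ω : ℕ → S | TA A ω = (n : ℕ∞) ∧ (n : ℕ∞) < TKt K ω}) := by
        intro n n' hnn'
        refine Set.disjoint_left.2 fun ω h1 h2 => hnn' ?_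
        have : ((n : ℕ∞)) = (n' : ℕ∞) := by rw [← h1.1, ← h2.1]
        exact_mod_cast this
      rw [← measure_iUnion hdisj (fun n => measurableSet_TA_eq_lt_TKt K A n)]
      congr 1
      ext ω
      simp only [Set.mem_iUnion, Set.mem_setOf_eq]
      constructor
      · rintro ⟨n, h1, h2⟩
        rw [h1]
        exact h2
      · intro h
        obtain ⟨n, hn⟩ := WithTop.ne_top_iff_exists.1 (ne_top_of_lt h)
        exact ⟨n, hn.symm, by rw [← hn] at h; exact h⟩
  -- assemble
  refine le_trans hstep1 ?_
  have hmid : (∑' n : ℕ, ∑' y : S,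
      X.μ x ({ω : ℕ → S | min (TKt K ω) (TA A ω) = (n : ℕ∞)} ∩ {ω | ω n = y})
        * X.ER y q (psiz z))
      ≤ (∑ y ∈ K.erase z,
            X.μ x {ω | TKt K ω < TA A ω ∧ evalAt ω (TKt K ω) = y} * X.ER y q (psiz z))
        + ((∫⁻ ω, (if TA A ω < TKt K ω then ENNReal.ofReal (v (evalAt ω (TA A ω))) else 0)
              ∂ X.μ x)
          + X.μ x {ω | TA A ω < TKt K ω} * M) := by
    refine le_trans (Summable.tsum_le_tsum (fun n => Summable.tsum_le_tsum (hbnd n)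
      ENNReal.summable ENNReal.summable) ENNReal.summable ENNReal.summable) ?_
    have hsplit : ∀ (n : ℕ) (y : S),
        X.μ x ({ω : ℕ → S | min (TKt K ω) (TA A ω) = (n : ℕ∞)} ∩ {ω | ω n = y})
            * ((if y ∈ K.erase z then X.ER y q (psiz z) else 0)
              + (if y ∈ A then 0 else ENNReal.ofReal (v y) + M))
          = X.μ x ({ω : ℕ → S | min (TKt K ω) (TA A ω) = (n : ℕ∞)} ∩ {ω | ω n = y})
              * (if y ∈ K.erase z then X.ER y q (psiz z) else 0)
            + X.μ x ({ω : ℕ → S | min (TKt K ω) (TA A ω) = (n : ℕ∞)} ∩ {ω | ω n = y})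
              * (if y ∈ A then 0 else ENNReal.ofReal (v y) + M) :=
      fun n y => mul_add _ _ _
    rw [tsum_congr (fun n => tsum_congr (hsplit n))]
    rw [tsum_congr (fun n : ℕ => ENNReal.tsum_add
      (f := fun y : S => X.μ x ({ω : ℕ → S | min (TKt K ω) (TA A ω) = (n : ℕ∞)}
        ∩ {ω | ω n = y}) * (if y ∈ K.erase z then X.ER y q (psiz z) else 0))
      (g := fun y : S => X.μ x ({ω : ℕ → S | min (TKt K ω) (TA A ω) = (n : ℕ∞)}
        ∩ {ω | ω n = y}) * (if y ∈ A then 0 else ENNReal.ofReal (v y) + M))),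
      ENNReal.tsum_add]
    exact add_le_add hI hII
  refine le_trans (add_le_add_right hmid _) (le_of_eq ?_)
  ring

end
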